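/- Let ρ > 0 and ν ∈ ℝ with cos(πν) ≠ 0. Then the function g₀(r) = −(√(r² + ρ²)/(4π cos(πν) r ρ)) · sin((ν + 1/2) · arccos((r² − ρ²)/(r² + ρ²))) satisfies g₀''(r) + (2/r) · g₀'(r) + (4 ν(ν+1) ρ²/(r² + ρ²)²) · g₀(r) = 0 for all r > 0. -/

import Mathlib

open Real

private lemma fish_hq (ρ : ℝ) (hρ : 0 < ρ) (t : ℝ) : (0:ℝ) < t ^ 2 + ρ ^ 2 := by positivity

private lemma fish_theta (ρ : ℝ) (hρ : 0 < ρ) (t : ℝ) (ht : 0 < t) :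
    HasDerivAt (fun u : ℝ => Real.arccos ((u ^ 2 - ρ ^ 2) / (u ^ 2 + ρ ^ 2)))
      (-(2 * ρ) / (t ^ 2 + ρ ^ 2)) t := by
  have hq := fish_hq ρ hρ t
  have h1 : HasDerivAt (fun u : ℝ => u ^ 2 - ρ ^ 2) (2 * t) t := by
    simpa using (hasDerivAt_pow 2 t).sub_const (ρ ^ 2)
  have h2 : HasDerivAt (fun u : ℝ => u ^ 2 + ρ ^ 2) (2 * t) t := by
    simpa using (hasDerivAt_pow 2 t).add_const (ρ ^ 2)
  have hx : HasDerivAt (fun u : ℝ => (u ^ 2 - ρ ^ 2) / (u ^ 2 + ρ ^ 2))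
      (4 * t * ρ ^ 2 / (t ^ 2 + ρ ^ 2) ^ 2) t := by
    have := h1.div h2 hq.ne'
    refine this.congr_deriv ?_
    field_simp
    ring
  have hlt : (t ^ 2 - ρ ^ 2) / (t ^ 2 + ρ ^ 2) < 1 := (div_lt_one hq).mpr (by nlinarith)
  have hgt : (-1 : ℝ) < (t ^ 2 - ρ ^ 2) / (t ^ 2 + ρ ^ 2) := (lt_div_iff₀ hq).mpr (by nlinarith)
  have harc := (Real.hasDerivAt_arccos hgt.ne' hlt.ne).comp t hx
  refine harc.congr_deriv ?_
  have h1x : 1 - ((t ^ 2 - ρ ^ 2) / (t ^ 2 + ρ ^ 2)) ^ 2 = (2 * t * ρ / (t ^ 2 + ρ ^ 2)) ^ 2 := by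
    field_simp
    ring
  rw [h1x, Real.sqrt_sq (by positivity)]
  field_simp
  ring

private lemma fish_s (ρ : ℝ) (hρ : 0 < ρ) (t : ℝ) :
    HasDerivAt (fun u : ℝ => Real.sqrt (u ^ 2 + ρ ^ 2)) (t / Real.sqrt (t ^ 2 + ρ ^ 2)) t := by
  have hq := fish_hq ρ hρ t
  have h2 : HasDerivAt (fun u : ℝ => u ^ 2 + ρ ^ 2) (2 * t) t := by
    simpa using (hasDerivAt_pow 2 t).add_const (ρ ^ 2)
  have := h2.sqrt hq.ne'
  refine this.congr_deriv ?_
  have hspos : 0 < Real.sqrt (t ^ 2 + ρ ^ 2) := Real.sqrt_pos.mpr hq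
  field_simp

private lemma fish_A (ρ ν : ℝ) (hρ : 0 < ρ) (t : ℝ) (ht : 0 < t) :
    HasDerivAt (fun u : ℝ => Real.sqrt (u ^ 2 + ρ ^ 2) *
        Real.sin ((ν + 1/2) * Real.arccos ((u ^ 2 - ρ ^ 2) / (u ^ 2 + ρ ^ 2))))
      (t / Real.sqrt (t ^ 2 + ρ ^ 2) *
          Real.sin ((ν + 1/2) * Real.arccos ((t ^ 2 - ρ ^ 2) / (t ^ 2 + ρ ^ 2)))
        - 2 * (ν + 1/2) * ρ / Real.sqrt (t ^ 2 + ρ ^ 2) *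
          Real.cos ((ν + 1/2) * Real.arccos ((t ^ 2 - ρ ^ 2) / (t ^ 2 + ρ ^ 2)))) t := by
  have hq := fish_hq ρ hρ t
  have hsin : HasDerivAt (fun u : ℝ =>
      Real.sin ((ν + 1/2) * Real.arccos ((u ^ 2 - ρ ^ 2) / (u ^ 2 + ρ ^ 2))))
      (Real.cos ((ν + 1/2) * Real.arccos ((t ^ 2 - ρ ^ 2) / (t ^ 2 + ρ ^ 2))) *
        ((ν + 1/2) * (-(2 * ρ) / (t ^ 2 + ρ ^ 2)))) t :=
    ((fish_theta ρ hρ t ht).const_mul (ν + 1/2)).sin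
  have := (fish_s ρ hρ t).mul hsin
  refine this.congr_deriv ?_
  set S := Real.sqrt (t ^ 2 + ρ ^ 2) with hSdef
  have hS2 : S ^ 2 = t ^ 2 + ρ ^ 2 := Real.sq_sqrt hq.le
  have hSpos : 0 < S := Real.sqrt_pos.mpr hq
  set P := (ν + 1/2) * Real.arccos ((t ^ 2 - ρ ^ 2) / (t ^ 2 + ρ ^ 2)) with hPdef
  rw [← hS2]
  field_simp
  ring

private lemma fish_A1 (ρ ν : ℝ) (hρ : 0 < ρ) (t : ℝ) (ht : 0 < t) :
    HasDerivAt (fun u : ℝ =>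
        u / Real.sqrt (u ^ 2 + ρ ^ 2) *
          Real.sin ((ν + 1/2) * Real.arccos ((u ^ 2 - ρ ^ 2) / (u ^ 2 + ρ ^ 2)))
        - 2 * (ν + 1/2) * ρ / Real.sqrt (u ^ 2 + ρ ^ 2) *
          Real.cos ((ν + 1/2) * Real.arccos ((u ^ 2 - ρ ^ 2) / (u ^ 2 + ρ ^ 2))))
      (-(4 * ν * (ν + 1) * ρ ^ 2) / Real.sqrt (t ^ 2 + ρ ^ 2) ^ 3 *
        Real.sin ((ν + 1/2) * Real.arccos ((t ^ 2 - ρ ^ 2) / (t ^ 2 + ρ ^ 2)))) t := by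
  have hq := fish_hq ρ hρ t
  have hSpos : 0 < Real.sqrt (t ^ 2 + ρ ^ 2) := Real.sqrt_pos.mpr hq
  have hθ := fish_theta ρ hρ t ht
  have hsin : HasDerivAt (fun u : ℝ =>
      Real.sin ((ν + 1/2) * Real.arccos ((u ^ 2 - ρ ^ 2) / (u ^ 2 + ρ ^ 2))))
      (Real.cos ((ν + 1/2) * Real.arccos ((t ^ 2 - ρ ^ 2) / (t ^ 2 + ρ ^ 2))) *
        ((ν + 1/2) * (-(2 * ρ) / (t ^ 2 + ρ ^ 2)))) t :=
    (hθ.const_mul (ν + 1/2)).sin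
  have hcos : HasDerivAt (fun u : ℝ =>
      Real.cos ((ν + 1/2) * Real.arccos ((u ^ 2 - ρ ^ 2) / (u ^ 2 + ρ ^ 2))))
      (-Real.sin ((ν + 1/2) * Real.arccos ((t ^ 2 - ρ ^ 2) / (t ^ 2 + ρ ^ 2))) *
        ((ν + 1/2) * (-(2 * ρ) / (t ^ 2 + ρ ^ 2)))) t :=
    (hθ.const_mul (ν + 1/2)).cos
  have hts : HasDerivAt (fun u : ℝ => u / Real.sqrt (u ^ 2 + ρ ^ 2))
      ((1 * Real.sqrt (t ^ 2 + ρ ^ 2) - t * (t / Real.sqrt (t ^ 2 + ρ ^ 2))) /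
        Real.sqrt (t ^ 2 + ρ ^ 2) ^ 2) t :=
    (hasDerivAt_id t).div (fish_s ρ hρ t) hSpos.ne'
  have hcs : HasDerivAt (fun u : ℝ => 2 * (ν + 1/2) * ρ / Real.sqrt (u ^ 2 + ρ ^ 2))
      ((0 * Real.sqrt (t ^ 2 + ρ ^ 2) - 2 * (ν + 1/2) * ρ * (t / Real.sqrt (t ^ 2 + ρ ^ 2))) /
        Real.sqrt (t ^ 2 + ρ ^ 2) ^ 2) t :=
    (hasDerivAt_const t (2 * (ν + 1/2) * ρ)).div (fish_s ρ hρ t) hSpos.ne'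
  have := (hts.mul hsin).sub (hcs.mul hcos)
  refine this.congr_deriv ?_
  set S := Real.sqrt (t ^ 2 + ρ ^ 2) with hSdef
  have hS2 : S ^ 2 = t ^ 2 + ρ ^ 2 := Real.sq_sqrt hq.le
  set P := (ν + 1/2) * Real.arccos ((t ^ 2 - ρ ^ 2) / (t ^ 2 + ρ ^ 2)) with hPdef
  have hρ2 : ρ ^ 2 = S ^ 2 - t ^ 2 := by rw [hS2]; ring
  clear_value S P
  rw [← hS2, hρ2]
  have hSpos : 0 < S := by nlinarith [sq_nonneg t]
  field_simp
  linear_combination ((4 * ν ^ 2 + 4 * ν + 1) * Real.sin P) * hS2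

theorem central_green_solves_radial_equation
    (ρ ν : ℝ) (hρ : 0 < ρ) (hν : Real.cos (Real.pi * ν) ≠ 0)
    (g₀ : ℝ → ℝ)
    (hg₀ : g₀ = fun r =>
      -(Real.sqrt (r ^ 2 + ρ ^ 2) / (4 * Real.pi * Real.cos (Real.pi * ν) * r * ρ))
        * Real.sin ((ν + 1 / 2) * Real.arccos ((r ^ 2 - ρ ^ 2) / (r ^ 2 + ρ ^ 2)))) :
    ∀ r : ℝ, 0 < r →
      deriv (deriv g₀) r + (2 / r) * deriv g₀ r
        + (4 * ν * (ν + 1) * ρ ^ 2 / (r ^ 2 + ρ ^ 2) ^ 2) * g₀ r = 0 := by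
  have hπ : Real.pi ≠ 0 := Real.pi_ne_zero
  -- rewrite g₀ in a convenient form
  have hfun : g₀ = fun t : ℝ => -(1 / (4 * Real.pi * Real.cos (Real.pi * ν) * ρ)) *
      ((Real.sqrt (t ^ 2 + ρ ^ 2) *
        Real.sin ((ν + 1/2) * Real.arccos ((t ^ 2 - ρ ^ 2) / (t ^ 2 + ρ ^ 2)))) / t) := by
    rw [hg₀]
    funext t
    ring
  intro r hr
  -- first derivative of g₀ on (0, ∞)
  have hd1 : ∀ t : ℝ, 0 < t → HasDerivAt g₀
      (-(1 / (4 * Real.pi * Real.cos (Real.pi * ν) * ρ)) *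
        ((t / Real.sqrt (t ^ 2 + ρ ^ 2) *
            Real.sin ((ν + 1/2) * Real.arccos ((t ^ 2 - ρ ^ 2) / (t ^ 2 + ρ ^ 2)))
          - 2 * (ν + 1/2) * ρ / Real.sqrt (t ^ 2 + ρ ^ 2) *
            Real.cos ((ν + 1/2) * Real.arccos ((t ^ 2 - ρ ^ 2) / (t ^ 2 + ρ ^ 2)))) / t
        - (Real.sqrt (t ^ 2 + ρ ^ 2) *
            Real.sin ((ν + 1/2) * Real.arccos ((t ^ 2 - ρ ^ 2) / (t ^ 2 + ρ ^ 2)))) / t ^ 2)) t := by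
    intro t ht
    rw [hfun]
    have h := (((fish_A ρ ν hρ t ht).div (hasDerivAt_id t) ht.ne').const_mul
      (-(1 / (4 * Real.pi * Real.cos (Real.pi * ν) * ρ))))
    refine h.congr_deriv ?_
    simp only [id_eq]
    field_simp
    -- second derivative
  have hev : deriv g₀ =ᶠ[nhds r] (fun t : ℝ =>
      -(1 / (4 * Real.pi * Real.cos (Real.pi * ν) * ρ)) *
        ((t / Real.sqrt (t ^ 2 + ρ ^ 2) *
            Real.sin ((ν + 1/2) * Real.arccos ((t ^ 2 - ρ ^ 2) / (t ^ 2 + ρ ^ 2)))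
          - 2 * (ν + 1/2) * ρ / Real.sqrt (t ^ 2 + ρ ^ 2) *
            Real.cos ((ν + 1/2) * Real.arccos ((t ^ 2 - ρ ^ 2) / (t ^ 2 + ρ ^ 2)))) / t
        - (Real.sqrt (t ^ 2 + ρ ^ 2) *
            Real.sin ((ν + 1/2) * Real.arccos ((t ^ 2 - ρ ^ 2) / (t ^ 2 + ρ ^ 2)))) / t ^ 2)) := by
    filter_upwards [isOpen_Ioi.eventually_mem hr] with t ht
    exact (hd1 t ht).deriv
  have hA := fish_A ρ ν hρ r hr
  have hA1 := fish_A1 ρ ν hρ r hr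
  have h1 := hA1.div (hasDerivAt_id r) hr.ne'
  have h2 := hA.div (hasDerivAt_pow 2 r) (by positivity)
  have hG1 := (h1.sub h2).const_mul (-(1 / (4 * Real.pi * Real.cos (Real.pi * ν) * ρ)))
  simp only [id_eq, Pi.div_def, Pi.sub_def] at hG1
  have e2 : deriv (deriv g₀) r = deriv (fun t : ℝ =>
      -(1 / (4 * Real.pi * Real.cos (Real.pi * ν) * ρ)) *
        ((t / Real.sqrt (t ^ 2 + ρ ^ 2) *
            Real.sin ((ν + 1/2) * Real.arccos ((t ^ 2 - ρ ^ 2) / (t ^ 2 + ρ ^ 2)))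
          - 2 * (ν + 1/2) * ρ / Real.sqrt (t ^ 2 + ρ ^ 2) *
            Real.cos ((ν + 1/2) * Real.arccos ((t ^ 2 - ρ ^ 2) / (t ^ 2 + ρ ^ 2)))) / t
        - (Real.sqrt (t ^ 2 + ρ ^ 2) *
            Real.sin ((ν + 1/2) * Real.arccos ((t ^ 2 - ρ ^ 2) / (t ^ 2 + ρ ^ 2)))) / t ^ 2)) r := hev.deriv_eq
  rw [e2, hG1.deriv, (hd1 r hr).deriv, hfun]
  simp only
  have hq := fish_hq ρ hρ r
  set S := Real.sqrt (r ^ 2 + ρ ^ 2) with hSdef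
  have hS2 : S ^ 2 = r ^ 2 + ρ ^ 2 := Real.sq_sqrt hq.le
  set P := (ν + 1/2) * Real.arccos ((r ^ 2 - ρ ^ 2) / (r ^ 2 + ρ ^ 2)) with hPdef
  have hρ2 : ρ ^ 2 = S ^ 2 - r ^ 2 := by rw [hS2]; ring
  have hSpos : 0 < S := Real.sqrt_pos.mpr hq
  clear_value S P
  rw [← hS2, hρ2]
  field_simp
  ring
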